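/- (Mean-value bound on the CUSUM weights.) For integers c_- < θ ≤ c < c_+, setting W_k = (c_+ − c_-)/((k − c_-)(c_+ − k)) for c_- < k < c_+, one has | √(W_c) − √(W_θ) | ≤ √2 · (c − θ) / min(θ − c_-, c_+ − c)^{3/2}. -/
import Mathlib

private lemma sqrt_sub_sqrt_le_aux (u v : ℝ) (hv : 0 < v) (h : v ≤ u) :
    Real.sqrt u - Real.sqrt v ≤ (u - v) / (2 * Real.sqrt v) := by
  have hsv : 0 < Real.sqrt v := Real.sqrt_pos.2 hv
  rw [le_div_iff₀ (by positivity)]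
  nlinarith [sq_nonneg (Real.sqrt u - Real.sqrt v), Real.sq_sqrt hv.le,
    Real.sq_sqrt (hv.le.trans h), Real.sqrt_nonneg u, Real.sqrt_nonneg v]

set_option maxHeartbeats 1000000 in
private lemma cusum_aux (a b d : ℝ) (ha : 0 < a) (hb : 0 < b) (hd : 0 ≤ d)
    (hab : a ≤ b) :
    |Real.sqrt ((a + b + d) / ((a + d) * b)) - Real.sqrt ((a + b + d) / (a * (b + d)))|
      ≤ Real.sqrt 2 * d / a ^ ((3 : ℝ) / 2) := by
  have hL : 0 < a + b + d := by linarith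
  have hX : 0 < a * (b + d) := by positivity
  have hY : 0 < (a + d) * b := by positivity
  have hXY : a * (b + d) ≤ (a + d) * b := by nlinarith
  have hvu : (a + b + d) / ((a + d) * b) ≤ (a + b + d) / (a * (b + d)) := by
    gcongr
  have hA : a ^ ((3 : ℝ) / 2) = Real.sqrt (a ^ 3) := by
    rw [show (3 : ℝ) / 2 = (3 : ℝ) * (1 / 2) by ring, Real.rpow_mul ha.le,
      show (3 : ℝ) = ((3 : ℕ) : ℝ) by norm_num, Real.rpow_natCast,
      ← Real.sqrt_eq_rpow]
  rw [abs_sub_comm, abs_of_nonneg (by linarith [Real.sqrt_le_sqrt hvu]), hA]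
  have step1 := sqrt_sub_sqrt_le_aux ((a + b + d) / (a * (b + d)))
    ((a + b + d) / ((a + d) * b)) (by positivity) hvu
  refine step1.trans ?_
  rw [div_le_div_iff₀ (by positivity) (by positivity)]
  -- square both sides
  have hlhs : 0 ≤ ((a + b + d) / (a * (b + d)) - (a + b + d) / ((a + d) * b)) *
      Real.sqrt (a ^ 3) :=
    mul_nonneg (by linarith) (Real.sqrt_nonneg _)
  have hrhs : 0 ≤ Real.sqrt 2 * d * (2 * Real.sqrt ((a + b + d) / ((a + d) * b))) := by
    positivity
  have hsq : (((a + b + d) / (a * (b + d)) - (a + b + d) / ((a + d) * b)) *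
      Real.sqrt (a ^ 3)) ^ 2 ≤
      (Real.sqrt 2 * d * (2 * Real.sqrt ((a + b + d) / ((a + d) * b)))) ^ 2 := by
    have e2 : Real.sqrt 2 ^ 2 = 2 := Real.sq_sqrt (by norm_num)
    have e3 : Real.sqrt (a ^ 3) ^ 2 = a ^ 3 := Real.sq_sqrt (by positivity)
    have e4 : Real.sqrt ((a + b + d) / ((a + d) * b)) ^ 2 = (a + b + d) / ((a + d) * b) :=
      Real.sq_sqrt (by positivity)
    have core2 : (a + b + d) * (b - a) ^ 2 * a ^ 3 ≤
        8 * (a * (b + d)) ^ 2 * ((a + d) * b) := by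
      have h1 : (b - a) ^ 2 ≤ b ^ 2 := by nlinarith
      have h2 : a + b + d ≤ 2 * (b + d) := by linarith
      have h4 : a * b ≤ 4 * ((b + d) * (a + d)) := by nlinarith
      have t1 : (a + b + d) * (b - a) ^ 2 * a ^ 3 ≤ 2 * (b + d) * b ^ 2 * a ^ 3 := by
        have := mul_le_mul h2 h1 (sq_nonneg _) (by positivity)
        nlinarith [pow_pos ha 3, mul_le_mul_of_nonneg_right this
          (pow_nonneg ha.le 3)]
      refine t1.trans ?_
      nlinarith [mul_le_mul_of_nonneg_left h4
        (show (0:ℝ) ≤ 2 * a ^ 2 * b * (b + d) by positivity)]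
    have lhseq : (((a + b + d) / (a * (b + d)) - (a + b + d) / ((a + d) * b)) *
        Real.sqrt (a ^ 3)) ^ 2 =
        ((a + b + d) * ((a + d) * b) - a * (b + d) * (a + b + d)) ^ 2 * a ^ 3 /
          (a * (b + d) * ((a + d) * b)) ^ 2 := by
      rw [mul_pow, e3, div_sub_div _ _ hX.ne' hY.ne', div_pow]
      ring
    have rhseq : (Real.sqrt 2 * d * (2 * Real.sqrt ((a + b + d) / ((a + d) * b)))) ^ 2 =
        8 * d ^ 2 * (a + b + d) / ((a + d) * b) := by
      rw [mul_pow, mul_pow, mul_pow, e2, e4]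
      ring
    rw [lhseq, rhseq, div_le_div_iff₀ (by positivity) (by positivity)]
    have hh := mul_le_mul_of_nonneg_left core2
      (mul_nonneg (mul_nonneg hL.le (sq_nonneg d)) hY.le)
    linarith [hh, sq_nonneg ((a + b + d) * ((a + d) * b) - a * (b + d) * (a + b + d)
      - (a + b + d) * (d * (b - a)))]
  nlinarith [hsq, hlhs, hrhs]

/-- Mean-value bound on the CUSUM weights: for integers `c_- < θ ≤ c < c_+`,
with `W_k = (c_+ − c_-)/((k − c_-)(c_+ − k))`,
`|√W_c − √W_θ| ≤ √2 (c − θ)/min(θ − c_-, c_+ − c)^{3/2}`. -/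
theorem cusum_weight_mean_value_bound
    (cm θ c cp : ℤ) (h1 : cm < θ) (h2 : θ ≤ c) (h3 : c < cp) :
    |Real.sqrt (((cp : ℝ) - cm) / (((c : ℝ) - cm) * ((cp : ℝ) - c)))
        - Real.sqrt (((cp : ℝ) - cm) / (((θ : ℝ) - cm) * ((cp : ℝ) - θ)))|
      ≤ Real.sqrt 2 * ((c : ℝ) - θ)
          / (min ((θ : ℝ) - cm) ((cp : ℝ) - c)) ^ ((3 : ℝ) / 2) := by
  have ha : (0 : ℝ) < (θ : ℝ) - cm := by
    have : (cm : ℝ) < θ := by exact_mod_cast h1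
    linarith
  have hb : (0 : ℝ) < (cp : ℝ) - c := by
    have : (c : ℝ) < cp := by exact_mod_cast h3
    linarith
  have hd : (0 : ℝ) ≤ (c : ℝ) - θ := by
    have : (θ : ℝ) ≤ c := by exact_mod_cast h2
    linarith
  rcases le_total ((θ : ℝ) - cm) ((cp : ℝ) - c) with hab | hab
  · rw [min_eq_left hab]
    have key := cusum_aux ((θ : ℝ) - cm) ((cp : ℝ) - c) ((c : ℝ) - θ) ha hb hd hab
    have e1 : ((cp : ℝ) - cm) / (((c : ℝ) - cm) * ((cp : ℝ) - c)) =
        (((θ : ℝ) - cm) + ((cp : ℝ) - c) + ((c : ℝ) - θ)) /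
          (((((θ : ℝ) - cm)) + ((c : ℝ) - θ)) * ((cp : ℝ) - c)) := by ring
    have e2 : ((cp : ℝ) - cm) / (((θ : ℝ) - cm) * ((cp : ℝ) - θ)) =
        (((θ : ℝ) - cm) + ((cp : ℝ) - c) + ((c : ℝ) - θ)) /
          (((θ : ℝ) - cm) * (((cp : ℝ) - c) + ((c : ℝ) - θ))) := by ring
    rw [e1, e2]
    exact key
  · rw [min_eq_right hab]
    have key := cusum_aux ((cp : ℝ) - c) ((θ : ℝ) - cm) ((c : ℝ) - θ) hb ha hd hab
    rw [abs_sub_comm]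
    have e1 : ((cp : ℝ) - cm) / (((θ : ℝ) - cm) * ((cp : ℝ) - θ)) =
        (((cp : ℝ) - c) + ((θ : ℝ) - cm) + ((c : ℝ) - θ)) /
          (((((cp : ℝ) - c)) + ((c : ℝ) - θ)) * ((θ : ℝ) - cm)) := by ring
    have e2 : ((cp : ℝ) - cm) / (((c : ℝ) - cm) * ((cp : ℝ) - c)) =
        (((cp : ℝ) - c) + ((θ : ℝ) - cm) + ((c : ℝ) - θ)) /
          (((cp : ℝ) - c) * (((θ : ℝ) - cm) + ((c : ℝ) - θ))) := by ring
    rw [e1, e2]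
    exact key
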